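/- Let K1 and K2 be cones in the normed linear spaces X1 and X2, K := K1 × K2, and let 0 < r_i < R_i and h_i ∈ K_i \ {0} (i = 1,2). Let ρ_i be the retraction of {x ∈ K_i : ‖x‖ ≤ R_i} onto {x ∈ K_i : r_i ≤ ‖x‖ ≤ R_i} given by ρ_i(x_i) = r_i·(x_i + (r_i − ‖x_i‖)²h_i)/‖x_i + (r_i − ‖x_i‖)²h_i‖ if ‖x_i‖ < r_i, and ρ_i(x_i) = x_i otherwise, and set ρ = (ρ1, ρ2). Suppose T = (T1, T2) : K̄_{r,R} → K is a compact map such that for each i ∈ {1,2} and all x ∈ K̄_{r,R}: ‖T_i x‖ ≥ ‖x_i‖ if ‖x_i‖ = r_i and ‖T_i x‖ ≤ ‖x_i‖ if ‖x_i‖ = R_i. If T has no fixed points x ∈ K̄_{r,R} with ‖x_i‖ = r_i or ‖x_i‖ = R_i for some i ∈ {1,2}, then the extension N := T ∘ ρ has no fixed point x = (x1,x2) ∈ K̄_R := {(x1,x2) ∈ K : ‖x_i‖ ≤ R_i for i = 1,2} such that ‖x_i‖ = r_i or ‖x_i‖ = R_i for some i ∈ {1,2}. -/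
import Mathlib


open Set

/-- A cone in a normed linear space: a closed convex subset `K` such that
`λ • u ∈ K` for every `u ∈ K` and every `λ ≥ 0`, and `K ∩ (-K) = {0}`. -/
def IsCone {X : Type*} [NormedAddCommGroup X] [NormedSpace ℝ X] (K : Set X) : Prop :=
  IsClosed K ∧ Convex ℝ K ∧ (∀ u ∈ K, ∀ l : ℝ, 0 ≤ l → l • u ∈ K) ∧ K ∩ (-K) = {0}

lemma cone_add {X : Type*} [NormedAddCommGroup X] [NormedSpace ℝ X] {K : Set X}
    (hK : IsCone K) {u v : X} (hu : u ∈ K) (hv : v ∈ K) : u + v ∈ K := by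
  obtain ⟨-, hconv, hscale, -⟩ := hK
  have h := hconv hu hv (by norm_num : (0:ℝ) ≤ 1/2) (by norm_num : (0:ℝ) ≤ 1/2) (by norm_num)
  have := hscale _ h 2 (by norm_num)
  have e : (2:ℝ) • ((1/2:ℝ) • u + (1/2:ℝ) • v) = u + v := by
    rw [smul_add, smul_smul, smul_smul]; norm_num
  rwa [e] at this

lemma cone_add_ne_zero {X : Type*} [NormedAddCommGroup X] [NormedSpace ℝ X] {K : Set X}
    (hK : IsCone K) {u v : X} (hu : u ∈ K) (hv : v ∈ K) (hv0 : v ≠ 0) : u + v ≠ 0 := by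
  intro h
  have hneg : -v ∈ K := by have : u = -v := by linear_combination (norm := abel_nf) h
                           rwa [this] at hu
  have : v ∈ K ∩ (-K) := ⟨hv, by simpa using hneg⟩
  rw [hK.2.2.2] at this
  exact hv0 this

lemma rho_spec {X : Type*} [NormedAddCommGroup X] [NormedSpace ℝ X] {K : Set X}
    (hK : IsCone K) {r R : ℝ} (hr : 0 < r) (hrR : r < R) {h : X} (hhK : h ∈ K)
    (hh0 : h ≠ 0) {x : X} (hxK : x ∈ K) (hxR : ‖x‖ ≤ R) {ρx : X}
    (hρx : ρx = if ‖x‖ < r then (r / ‖x + (r - ‖x‖) ^ 2 • h‖) • (x + (r - ‖x‖) ^ 2 • h) else x) :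
    ρx ∈ K ∧ r ≤ ‖ρx‖ ∧ ‖ρx‖ ≤ R ∧ (‖x‖ < r → ‖ρx‖ = r) ∧ (r ≤ ‖x‖ → ρx = x) := by
  by_cases hlt : ‖x‖ < r
  · set v := x + (r - ‖x‖) ^ 2 • h with hv
    have hsK : (r - ‖x‖) ^ 2 • h ∈ K := hK.2.2.1 h hhK _ (sq_nonneg _)
    have hs0 : (r - ‖x‖) ^ 2 • h ≠ 0 :=
      smul_ne_zero (pow_ne_zero _ (sub_ne_zero.mpr (ne_of_gt hlt))) hh0
    have hvK : v ∈ K := cone_add hK hxK hsK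
    have hv0 : v ≠ 0 := cone_add_ne_zero hK hxK hsK hs0
    have hvn : ‖v‖ ≠ 0 := norm_ne_zero_iff.mpr hv0
    have hρ : ρx = (r / ‖v‖) • v := by rw [hρx, if_pos hlt]
    have hnorm : ‖ρx‖ = r := by
      rw [hρ, norm_smul, Real.norm_eq_abs, abs_of_nonneg (div_nonneg hr.le (norm_nonneg _)),
        div_mul_cancel₀ _ hvn]
    refine ⟨?_, hnorm.ge.trans_eq rfl, ?_, fun _ => hnorm, fun hge => absurd hlt (not_lt.mpr hge)⟩
    · rw [hρ]; exact hK.2.2.1 v hvK _ (div_nonneg hr.le (norm_nonneg _))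
    · rw [hnorm]; exact hrR.le
  · have hρ : ρx = x := by rw [hρx, if_neg hlt]
    exact ⟨hρ ▸ hxK, hρ ▸ (not_lt.mp hlt), hρ ▸ hxR, fun h' => absurd h' hlt, fun _ => hρ⟩

/-- If a compressive-compressive compact map `T` has no fixed points on the boundary
of the shell `K̄_{r,R}`, then neither does its extension `N := T ∘ ρ` on the boundary
spheres inside `K̄_R`. -/
theorem extension_no_boundary_fixed_points
    {X1 X2 : Type*} [NormedAddCommGroup X1] [NormedSpace ℝ X1]
    [NormedAddCommGroup X2] [NormedSpace ℝ X2]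
    (K1 : Set X1) (K2 : Set X2) (hK1 : IsCone K1) (hK2 : IsCone K2)
    (r1 r2 R1 R2 : ℝ) (hr1 : 0 < r1) (hr2 : 0 < r2)
    (hrR1 : r1 < R1) (hrR2 : r2 < R2)
    (h1 : X1) (hh1K : h1 ∈ K1) (hh10 : h1 ≠ 0)
    (h2 : X2) (hh2K : h2 ∈ K2) (hh20 : h2 ≠ 0)
    (ρ1 : X1 → X1)
    (hρ1 : ∀ x : X1, ρ1 x =
      if ‖x‖ < r1 then
        (r1 / ‖x + (r1 - ‖x‖) ^ 2 • h1‖) • (x + (r1 - ‖x‖) ^ 2 • h1)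
      else x)
    (ρ2 : X2 → X2)
    (hρ2 : ∀ x : X2, ρ2 x =
      if ‖x‖ < r2 then
        (r2 / ‖x + (r2 - ‖x‖) ^ 2 • h2‖) • (x + (r2 - ‖x‖) ^ 2 • h2)
      else x)
    (KrR KR : Set (X1 × X2))
    (hKrR : KrR = {x : X1 × X2 | x.1 ∈ K1 ∧ x.2 ∈ K2 ∧
      r1 ≤ ‖x.1‖ ∧ ‖x.1‖ ≤ R1 ∧ r2 ≤ ‖x.2‖ ∧ ‖x.2‖ ≤ R2})
    (hKR : KR = {x : X1 × X2 | x.1 ∈ K1 ∧ x.2 ∈ K2 ∧ ‖x.1‖ ≤ R1 ∧ ‖x.2‖ ≤ R2})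
    (T : X1 × X2 → X1 × X2)
    (hmap : MapsTo T KrR (K1 ×ˢ K2))
    (hcont : ContinuousOn T KrR)
    (hcpt : IsCompact (closure (T '' KrR)))
    (hT1 : ∀ x ∈ KrR, (‖x.1‖ = r1 → ‖x.1‖ ≤ ‖(T x).1‖) ∧ (‖x.1‖ = R1 → ‖(T x).1‖ ≤ ‖x.1‖))
    (hT2 : ∀ x ∈ KrR, (‖x.2‖ = r2 → ‖x.2‖ ≤ ‖(T x).2‖) ∧ (‖x.2‖ = R2 → ‖(T x).2‖ ≤ ‖x.2‖))
    (hTfix : ∀ x ∈ KrR, (‖x.1‖ = r1 ∨ ‖x.1‖ = R1 ∨ ‖x.2‖ = r2 ∨ ‖x.2‖ = R2) → T x ≠ x)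
    (N : X1 × X2 → X1 × X2)
    (hN : ∀ x : X1 × X2, N x = T (ρ1 x.1, ρ2 x.2)) :
    ∀ x ∈ KR, (‖x.1‖ = r1 ∨ ‖x.1‖ = R1 ∨ ‖x.2‖ = r2 ∨ ‖x.2‖ = R2) → N x ≠ x := by
  intro x hx hbd hfix
  rw [hKR] at hx
  obtain ⟨hx1K, hx2K, hx1R, hx2R⟩ := hx
  obtain ⟨hy1K, hy1r, hy1R, hy1lt, hy1ge⟩ :=
    rho_spec hK1 hr1 hrR1 hh1K hh10 hx1K hx1R (hρ1 x.1)
  obtain ⟨hy2K, hy2r, hy2R, hy2lt, hy2ge⟩ :=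
    rho_spec hK2 hr2 hrR2 hh2K hh20 hx2K hx2R (hρ2 x.2)
  set y : X1 × X2 := (ρ1 x.1, ρ2 x.2) with hy
  have hyKrR : y ∈ KrR := by
    rw [hKrR]; exact ⟨hy1K, hy2K, hy1r, hy1R, hy2r, hy2R⟩
  rw [hN] at hfix
  by_cases h1lt : ‖x.1‖ < r1
  · have hn : ‖y.1‖ = r1 := hy1lt h1lt
    have := (hT1 y hyKrR).1 hn
    rw [hn, hfix] at this
    exact absurd h1lt (not_lt.mpr this)
  · by_cases h2lt : ‖x.2‖ < r2
    · have hn : ‖y.2‖ = r2 := hy2lt h2lt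
      have := (hT2 y hyKrR).1 hn
      rw [hn, hfix] at this
      exact absurd h2lt (not_lt.mpr this)
    · have e1 : ρ1 x.1 = x.1 := hy1ge (not_lt.mp h1lt)
      have e2 : ρ2 x.2 = x.2 := hy2ge (not_lt.mp h2lt)
      have hyx : y = x := by rw [hy, e1, e2]
      rw [hyx] at hyKrR
      have hfix' : T x = x := by rwa [e1, e2, Prod.mk.eta] at hfix
      exact hTfix x hyKrR hbd hfix'
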